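/- Let A ∈ ℂ^{n×N} with columns a_ℓ, let S ⊆ {1,…,N} with A_S injective, and let X ∈ ℂ^{N×L} with supp X = S. Suppose there exists H ∈ ℂ^{n×L} with A_S* H = sgn(X^S) and ‖H* a_ℓ‖₂ < 1 for all ℓ ∉ S. Then X is the unique minimizer of ‖Z‖_{2,1} = ∑_{j=1}^N ‖Z^j‖₂ subject to AZ = AX. -/

import Mathlib

open Matrix
open scoped BigOperators

/-- The column submatrix `A_S`. -/
noncomputable def colSub {n N : ℕ} (A : Matrix (Fin n) (Fin N) ℂ) (S : Finset (Fin N)) :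
    Matrix (Fin n) {j // j ∈ S} ℂ :=
  Matrix.of fun i j => A i j.1

/-- The sign matrix `sgn(X^S)`: each entry of `X^S` divided by the norm of its row. -/
noncomputable def sgnXS {N L : ℕ} (X : Matrix (Fin N) (Fin L) ℂ) (S : Finset (Fin N)) :
    Matrix {j // j ∈ S} (Fin L) ℂ :=
  Matrix.of fun j l => X j.1 l / (Real.sqrt (∑ l', ‖X j.1 l'‖ ^ 2) : ℂ)

private lemma cs_re {L : ℕ} (w z : Fin L → ℂ) :
    (∑ l, w l * z l).re ≤ Real.sqrt (∑ l, ‖w l‖ ^ 2) * Real.sqrt (∑ l, ‖z l‖ ^ 2) := by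
  have h := norm_inner_le_norm (𝕜 := ℂ) (E := EuclideanSpace ℂ (Fin L))
      (WithLp.toLp 2 (fun l => (starRingEnd ℂ) (w l))) (WithLp.toLp 2 (fun l => z l))
  rw [EuclideanSpace.norm_eq, EuclideanSpace.norm_eq] at h
  simp only [PiLp.inner_apply, PiLp.toLp_apply, RCLike.inner_apply, RCLike.conj_conj, RCLike.norm_conj] at h
  exact le_trans (Complex.re_le_norm _) (by simpa [mul_comm] using h)

/-- Dual certificate condition: if `supp X = S`, `A_S` is injective, and there exists
`H` with `A_S* H = sgn(X^S)` and `‖H* a_ℓ‖₂ < 1` for all `ℓ ∉ S`, then `X` is the unique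
minimizer of `‖·‖_{2,1}` subject to `AZ = AX`. -/
theorem stmt_19 (n N L : ℕ) (A : Matrix (Fin n) (Fin N) ℂ) (S : Finset (Fin N))
    (X : Matrix (Fin N) (Fin L) ℂ)
    (hinj : Function.Injective fun v : {j // j ∈ S} → ℂ => (colSub A S).mulVec v)
    (hsupp : ∀ j, (∃ l, X j l ≠ 0) ↔ j ∈ S)
    (H : Matrix (Fin n) (Fin L) ℂ)
    (hH1 : (colSub A S)ᴴ * H = sgnXS X S)
    (hH2 : ∀ ℓ ∉ S, Real.sqrt (∑ l : Fin L, ‖Hᴴ.mulVec (fun i => A i ℓ) l‖ ^ 2) < 1) :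
    ∀ Z : Matrix (Fin N) (Fin L) ℂ, A * Z = A * X → Z ≠ X →
      ∑ j : Fin N, Real.sqrt (∑ l, ‖X j l‖ ^ 2) <
        ∑ j : Fin N, Real.sqrt (∑ l, ‖Z j l‖ ^ 2) := by
  intro Z hAZ hZX
  set w : Fin N → Fin L → ℂ := fun j l => ∑ i, (starRingEnd ℂ) (H i l) * A i j with hw
  set r : Fin N → ℝ := fun j => Real.sqrt (∑ l, ‖X j l‖ ^ 2) with hr
  have hX0 : ∀ j ∉ S, ∀ l, X j l = 0 := by
    intro j hj l
    by_contra hne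
    exact hj ((hsupp j).mp ⟨l, hne⟩)
  have hrpos : ∀ j ∈ S, 0 < r j := by
    intro j hj
    obtain ⟨l, hl⟩ := (hsupp j).mpr hj
    apply Real.sqrt_pos.mpr
    exact (pow_pos (norm_pos_iff.mpr hl) 2).trans_le
      (Finset.single_le_sum (f := fun l => ‖X j l‖ ^ 2) (fun _ _ => by positivity)
        (Finset.mem_univ l))
  -- hH2 in terms of w
  have hw2 : ∀ ℓ ∉ S, Real.sqrt (∑ l, ‖w ℓ l‖ ^ 2) < 1 := by
    intro ℓ hl
    have := hH2 ℓ hl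
    simpa [Matrix.mulVec, dotProduct, Matrix.conjTranspose_apply, hw,
      Complex.star_def] using this
  -- w on S rows
  have hwS : ∀ j (hj : j ∈ S) (l : Fin L), w j l = (starRingEnd ℂ) (X j l) / (r j : ℂ) := by
    intro j hj l
    have h := congrFun (congrFun hH1 ⟨j, hj⟩) l
    simp only [Matrix.mul_apply, Matrix.conjTranspose_apply, colSub, sgnXS, Matrix.of_apply,
      Complex.star_def] at h
    have h2 := congrArg (starRingEnd ℂ) h
    simp only [map_sum, _root_.map_mul, Complex.conj_conj, map_div₀, Complex.conj_ofReal] at h2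
    rw [show w j l = ∑ i, (starRingEnd ℂ) (H i l) * A i j from rfl]
    rw [Finset.sum_congr rfl fun i _ => mul_comm ((starRingEnd ℂ) (H i l)) (A i j)]
    exact h2
  have hwS1 : ∀ j ∈ S, Real.sqrt (∑ l, ‖w j l‖ ^ 2) = 1 := by
    intro j hj
    have hrj := hrpos j hj
    have hstep : ∀ l, ‖w j l‖ ^ 2 = ‖X j l‖ ^ 2 / r j ^ 2 := by
      intro l
      rw [hwS j hj l, norm_div, RCLike.norm_conj, Complex.norm_real, Real.norm_eq_abs,
        abs_of_pos hrj, div_pow]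
    have hr2 : r j ^ 2 = ∑ l, ‖X j l‖ ^ 2 :=
      Real.sq_sqrt (Finset.sum_nonneg fun l _ => by positivity)
    have hSigpos : 0 < ∑ l, ‖X j l‖ ^ 2 := by
      rw [← hr2]; exact pow_pos hrj 2
    rw [Finset.sum_congr rfl fun l _ => hstep l, ← Finset.sum_div, hr2,
      div_self (ne_of_gt hSigpos), Real.sqrt_one]
  -- value of the per-row sum against X
  have hXval : ∀ j, (∑ l, w j l * X j l) = ((r j : ℝ) : ℂ) := by
    intro j
    by_cases hj : j ∈ S
    · have hrj := hrpos j hj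
      have hstep : ∀ l, w j l * X j l = ((‖X j l‖ ^ 2 : ℝ) : ℂ) / (r j : ℂ) := by
        intro l
        rw [hwS j hj l, div_mul_eq_mul_div, Complex.conj_mul']
        norm_cast
      have hr2 : r j ^ 2 = ∑ l, ‖X j l‖ ^ 2 :=
        Real.sq_sqrt (Finset.sum_nonneg fun l _ => by positivity)
      rw [Finset.sum_congr rfl fun l _ => hstep l, ← Finset.sum_div, ← Complex.ofReal_sum,
        ← hr2, pow_two, Complex.ofReal_mul, mul_div_assoc,
        div_self (Complex.ofReal_ne_zero.mpr (ne_of_gt hrj)), mul_one]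
    · have h0 : ∀ l, X j l = 0 := hX0 j hj
      simp only [h0, mul_zero, Finset.sum_const_zero]
      rw [hr]
      simp [h0]
  -- swap lemma
  have hswap : ∀ M : Matrix (Fin N) (Fin L) ℂ,
      (∑ j, ∑ l, w j l * M j l) = ∑ l, ∑ i, (starRingEnd ℂ) (H i l) * (A * M) i l := by
    intro M
    simp only [hw, Finset.sum_mul, Matrix.mul_apply, Finset.mul_sum]
    rw [Finset.sum_comm]
    refine Finset.sum_congr rfl fun l _ => ?_
    rw [Finset.sum_comm]
    exact Finset.sum_congr rfl fun i _ => Finset.sum_congr rfl fun j _ => by ring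
  have hkey : (∑ j, ∑ l, w j l * Z j l) = (∑ j, ∑ l, w j l * X j l) := by
    rw [hswap Z, hswap X, hAZ]
  -- case split
  by_cases hall : ∀ j ∉ S, ∀ l, Z j l = 0
  · exfalso
    apply hZX
    ext j l
    have hcol : ∀ p : Matrix (Fin N) (Fin L) ℂ, (∀ j ∉ S, ∀ l, p j l = 0) →
        (colSub A S).mulVec (fun q : {j // j ∈ S} => p q.1 l)
          = fun i => (A * p) i l := by
      intro p hp
      funext i
      simp only [Matrix.mulVec, dotProduct, colSub, Matrix.of_apply, Matrix.mul_apply]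
      rw [Finset.sum_coe_sort S (fun q => A i q * p q l)]
      exact Finset.sum_subset (Finset.subset_univ S)
        (fun x _ hx => by rw [hp x hx l, mul_zero])
    have hZcol := hcol Z hall
    have hXcol := hcol X hX0
    have heq : (colSub A S).mulVec (fun q : {j // j ∈ S} => Z q.1 l)
        = (colSub A S).mulVec (fun q : {j // j ∈ S} => X q.1 l) := by
      rw [hZcol, hXcol, hAZ]
    have := hinj heq
    by_cases hj : j ∈ S
    · exact congrFun this ⟨j, hj⟩
    · rw [hall j hj l, hX0 j hj l]
  · push_neg at hall
    obtain ⟨j₀, hj₀S, l₀, hl₀⟩ := hall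
    have hZj₀pos : 0 < Real.sqrt (∑ l, ‖Z j₀ l‖ ^ 2) := by
      apply Real.sqrt_pos.mpr
      exact (pow_pos (norm_pos_iff.mpr hl₀) 2).trans_le
        (Finset.single_le_sum (f := fun l => ‖Z j₀ l‖ ^ 2) (fun _ _ => by positivity)
          (Finset.mem_univ l₀))
    have hwle : ∀ j, Real.sqrt (∑ l, ‖w j l‖ ^ 2) ≤ 1 := by
      intro j
      by_cases hj : j ∈ S
      · exact le_of_eq (hwS1 j hj)
      · exact le_of_lt (hw2 j hj)
    calc ∑ j : Fin N, r j
        = (∑ j, ∑ l, w j l * X j l).re := by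
          rw [show (∑ j, ∑ l, w j l * X j l) = ((∑ j, r j : ℝ) : ℂ) by
            rw [Complex.ofReal_sum]; exact Finset.sum_congr rfl fun j _ => hXval j]
          rw [Complex.ofReal_re]
      _ = (∑ j, ∑ l, w j l * Z j l).re := by rw [hkey]
      _ = ∑ j, (∑ l, w j l * Z j l).re := Complex.re_sum _ _
      _ < ∑ j : Fin N, Real.sqrt (∑ l, ‖Z j l‖ ^ 2) := by
          apply Finset.sum_lt_sum
          · intro j _
            calc (∑ l, w j l * Z j l).re
                ≤ Real.sqrt (∑ l, ‖w j l‖ ^ 2) * Real.sqrt (∑ l, ‖Z j l‖ ^ 2) :=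
                  cs_re _ _
              _ ≤ 1 * Real.sqrt (∑ l, ‖Z j l‖ ^ 2) := by
                  apply mul_le_mul_of_nonneg_right (hwle j) (Real.sqrt_nonneg _)
              _ = Real.sqrt (∑ l, ‖Z j l‖ ^ 2) := one_mul _
          · refine ⟨j₀, Finset.mem_univ j₀, ?_⟩
            calc (∑ l, w j₀ l * Z j₀ l).re
                ≤ Real.sqrt (∑ l, ‖w j₀ l‖ ^ 2) * Real.sqrt (∑ l, ‖Z j₀ l‖ ^ 2) :=
                  cs_re _ _
              _ < 1 * Real.sqrt (∑ l, ‖Z j₀ l‖ ^ 2) :=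
                  mul_lt_mul_of_pos_right (hw2 j₀ hj₀S) hZj₀pos
              _ = Real.sqrt (∑ l, ‖Z j₀ l‖ ^ 2) := one_mul _
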